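/- Let 1 ≤ p < 2, d ≥ 1, s > d(2−p)/p and 0 < b < ∞. There is a constant C, depending only on d, p, s and b, such that for all nonnegative measurable functions f, k : ℝ^d → [0, ∞) with f ∈ L_1(μ_s) and k ∈ L_1(μ_s), and all h ∈ (0, b], ∫_{ℝ^d} (k_h * f)^{p/2}(y) dy ≤ C (‖f‖_{L_1(μ_s)} ‖k‖_{L_1(μ_s)})^{p/2}, where * denotes convolution. -/

import Mathlib

open MeasureTheory
open scoped ENNReal

set_option maxHeartbeats 1000000 in
/-- Let `1 ≤ p < 2`, `s > d(2−p)/p` and `0 < b < ∞`. There is a constant `C`,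
depending only on `d, p, s, b`, such that for all nonnegative measurable `f, k : ℝ^d → [0,∞)`
in `L_1(μ_s)` (where `dμ_s(t) = (1+|t|)^s dt`) and all `h ∈ (0, b]`,
`∫ (k_h * f)^{p/2} ≤ C (‖f‖_{L_1(μ_s)} ‖k‖_{L_1(μ_s)})^{p/2}`, where
`k_h(t) = h^{−1} k(t/h^{1/d})`. -/
theorem stmt5 (d : ℕ) (hd : 1 ≤ d) (p s b : ℝ)
    (hp1 : 1 ≤ p) (hp2 : p < 2) (hs : (d : ℝ) * (2 - p) / p < s) (hb : 0 < b) :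
    ∃ C : ℝ, 0 < C ∧
      ∀ f k : EuclideanSpace ℝ (Fin d) → ℝ,
        Measurable f → Measurable k → (∀ x, 0 ≤ f x) → (∀ x, 0 ≤ k x) →
        Integrable (fun y : EuclideanSpace ℝ (Fin d) => (1 + ‖y‖) ^ s * f y) →
        Integrable (fun y : EuclideanSpace ℝ (Fin d) => (1 + ‖y‖) ^ s * k y) →
        ∀ h : ℝ, 0 < h → h ≤ b →
          (∫⁻ y : EuclideanSpace ℝ (Fin d),
              ENNReal.ofReal
                ((∫ x, (h⁻¹ * k ((h ^ ((1 : ℝ) / d))⁻¹ • (y - x))) * f x) ^ (p / 2))) ≤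
            ENNReal.ofReal (C *
              ((∫ y : EuclideanSpace ℝ (Fin d), (1 + ‖y‖) ^ s * f y) *
                (∫ y : EuclideanSpace ℝ (Fin d), (1 + ‖y‖) ^ s * k y)) ^ (p / 2)) := by
  classical
  have hd0 : (0:ℝ) < d := by exact_mod_cast hd
  have hp0 : (0:ℝ) < p := lt_of_lt_of_le one_pos hp1
  have h2p : (0:ℝ) < 2 - p := by linarith
  set q : ℝ := p / 2 with hq_def
  have hq0 : 0 < q := by positivity
  have hq1 : q < 1 := by rw [hq_def]; linarith
  have hq1' : 0 < 1 - q := by linarith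
  have hs0 : 0 < s := lt_of_le_of_lt (by positivity) hs
  set r : ℝ := s * q / (1 - q) with hr_def
  have hdr : (d:ℝ) < r := by
    rw [hr_def, hq_def]
    rw [div_lt_iff₀ hp0] at hs
    rw [lt_div_iff₀ (by linarith : (0:ℝ) < 1 - p/2)]
    nlinarith
  set M : ℝ := (max 1 b) ^ ((1:ℝ)/d) with hM_def
  have hM0 : 0 < M := Real.rpow_pos_of_pos (lt_of_lt_of_le one_pos (le_max_left 1 b)) _
  have hM1 : 1 ≤ M := by
    have := Real.rpow_le_rpow (le_of_lt one_pos) (le_max_left 1 b) (by positivity : (0:ℝ) ≤ 1/d)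
    rwa [Real.one_rpow] at this
  have hMs0 : 0 < M ^ s := Real.rpow_pos_of_pos hM0 _
  have hIr_int : Integrable (fun y : EuclideanSpace ℝ (Fin d) => (1 + ‖y‖) ^ (-r)) :=
    integrable_one_add_norm (by rw [finrank_euclideanSpace_fin]; exact hdr)
  set Ir : ℝ := ∫ y : EuclideanSpace ℝ (Fin d), (1 + ‖y‖) ^ (-r) with hIr_def
  have hIr_pos : 0 < Ir := by
    rw [hIr_def]
    rw [integral_pos_iff_support_of_nonneg
      (fun y => Real.rpow_nonneg (by positivity) _) hIr_int]
    have hsupp : Function.support (fun y : EuclideanSpace ℝ (Fin d) => (1 + ‖y‖) ^ (-r))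
        = Set.univ := by
      ext y
      simp only [Function.mem_support, Set.mem_univ, iff_true]
      exact (Real.rpow_pos_of_pos (by positivity) _).ne'
    rw [hsupp]
    exact isOpen_univ.measure_pos volume ⟨0, trivial⟩
  refine ⟨M ^ (s*q) * Ir ^ (1-q), by positivity, ?_⟩
  intro f k hfm hkm hf0 hk0 hfi hki h hh0 hhb
  set c : ℝ := h ^ ((1:ℝ)/d) with hc_def
  have hc0 : 0 < c := Real.rpow_pos_of_pos hh0 _
  have hcM : c ≤ M := Real.rpow_le_rpow hh0.le (le_trans hhb (le_max_right 1 b)) (by positivity)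
  set W : EuclideanSpace ℝ (Fin d) → ℝ≥0∞ := fun y => ENNReal.ofReal ((1+‖y‖)^s) with hW_def
  set F : EuclideanSpace ℝ (Fin d) → ℝ≥0∞ := fun x => ENNReal.ofReal (f x) with hF_def
  set K : EuclideanSpace ℝ (Fin d) → ℝ≥0∞ :=
    fun t => ENNReal.ofReal (h⁻¹ * k (c⁻¹ • t)) with hK_def
  have hW0 : ∀ y, W y ≠ 0 := fun y => by
    simp only [hW_def, ne_eq, ENNReal.ofReal_eq_zero, not_le]
    positivity
  have hWtop : ∀ y, W y ≠ ⊤ := fun y => ENNReal.ofReal_ne_top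
  have hWm : Measurable W := by
    apply ENNReal.measurable_ofReal.comp
    exact ((continuous_const.add continuous_norm).rpow_const
      (fun y => Or.inr hs0.le)).measurable
  have hFm : Measurable F := ENNReal.measurable_ofReal.comp hfm
  have hKm : Measurable K := by
    apply ENNReal.measurable_ofReal.comp
    exact measurable_const.mul (hkm.comp (measurable_const_smul c⁻¹))
  set G : EuclideanSpace ℝ (Fin d) → ℝ≥0∞ := fun y => ∫⁻ x, K (y - x) * F x with hG_def
  have hGm : Measurable G := by
    apply Measurable.lintegral_prod_right'
      (f := fun z : EuclideanSpace ℝ (Fin d) × EuclideanSpace ℝ (Fin d) => K (z.1 - z.2) * F z.2)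
    exact (hKm.comp (measurable_fst.sub measurable_snd)).mul (hFm.comp measurable_snd)
  -- Step 1: pointwise bound on the inner integral
  have step1 : ∀ y : EuclideanSpace ℝ (Fin d),
      ENNReal.ofReal ((∫ x, (h⁻¹ * k (c⁻¹ • (y - x))) * f x) ^ q) ≤ G y ^ q := by
    intro y
    have hnn : ∀ x, 0 ≤ (h⁻¹ * k (c⁻¹ • (y - x))) * f x := fun x =>
      mul_nonneg (mul_nonneg (by positivity) (hk0 _)) (hf0 _)
    have hA : 0 ≤ ∫ x, (h⁻¹ * k (c⁻¹ • (y - x))) * f x := integral_nonneg hnn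
    rw [← ENNReal.ofReal_rpow_of_nonneg hA hq0.le]
    refine ENNReal.rpow_le_rpow ?_ hq0.le
    by_cases hint : Integrable (fun x => (h⁻¹ * k (c⁻¹ • (y - x))) * f x)
    · rw [MeasureTheory.ofReal_integral_eq_lintegral_ofReal hint
        (Filter.Eventually.of_forall hnn)]
      refine le_of_eq (lintegral_congr fun x => ?_)
      rw [ENNReal.ofReal_mul (mul_nonneg (by positivity) (hk0 _))]
    · rw [integral_undef hint]
      simp
  -- pointwise W subadditivity
  have hWsub : ∀ x y : EuclideanSpace ℝ (Fin d), W y ≤ W (y - x) * W x := by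
    intro x y
    show ENNReal.ofReal ((1+‖y‖)^s) ≤ ENNReal.ofReal ((1+‖y - x‖)^s) * ENNReal.ofReal ((1+‖x‖)^s)
    rw [← ENNReal.ofReal_mul (Real.rpow_nonneg (by positivity) _)]
    apply ENNReal.ofReal_le_ofReal
    rw [← Real.mul_rpow (by positivity) (by positivity)]
    apply Real.rpow_le_rpow (by positivity) ?_ hs0.le
    have h1 : ‖y‖ ≤ ‖y - x‖ + ‖x‖ := by
      calc ‖y‖ = ‖(y - x) + x‖ := by rw [sub_add_cancel]
      _ ≤ ‖y - x‖ + ‖x‖ := norm_add_le _ _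
    nlinarith [norm_nonneg (y - x), norm_nonneg x]
  -- lintegrals of weighted f and k
  set Lf : ℝ≥0∞ := ∫⁻ x, W x * F x with hLf_def
  set Lk : ℝ≥0∞ := ∫⁻ x, W x * ENNReal.ofReal (k x) with hLk_def
  have hLf : Lf = ENNReal.ofReal (∫ x : EuclideanSpace ℝ (Fin d), (1+‖x‖)^s * f x) := by
    rw [MeasureTheory.ofReal_integral_eq_lintegral_ofReal hfi
      (Filter.Eventually.of_forall fun x => mul_nonneg (Real.rpow_nonneg (by positivity) _) (hf0 x))]
    exact lintegral_congr fun x =>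
      (ENNReal.ofReal_mul (Real.rpow_nonneg (by positivity) _)).symm
  have hLk : Lk = ENNReal.ofReal (∫ x : EuclideanSpace ℝ (Fin d), (1+‖x‖)^s * k x) := by
    rw [MeasureTheory.ofReal_integral_eq_lintegral_ofReal hki
      (Filter.Eventually.of_forall fun x => mul_nonneg (Real.rpow_nonneg (by positivity) _) (hk0 x))]
    exact lintegral_congr fun x =>
      (ENNReal.ofReal_mul (Real.rpow_nonneg (by positivity) _)).symm
  -- scaling bound for K
  set J : ℝ≥0∞ := ∫⁻ t, K t * W t with hJ_def
  have hJ_le : J ≤ ENNReal.ofReal (M ^ s) * Lk := by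
    have hc_ne : c ≠ 0 := hc0.ne'
    have hcd : c ^ (Module.finrank ℝ (EuclideanSpace ℝ (Fin d))) = h := by
      rw [finrank_euclideanSpace_fin, hc_def, ← Real.rpow_natCast (h ^ ((1:ℝ)/d)) d,
        ← Real.rpow_mul hh0.le]
      rw [one_div, inv_mul_cancel₀ (by exact_mod_cast hd0.ne'), Real.rpow_one]
    have hmap : Measure.map (c • · : EuclideanSpace ℝ (Fin d) → EuclideanSpace ℝ (Fin d)) volume
        = ENNReal.ofReal h⁻¹ • volume := by
      rw [Measure.map_addHaar_smul volume hc_ne, hcd, abs_of_pos (by positivity)]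
    have hml : Measurable fun t => K t * W t := hKm.mul hWm
    have hkey : J = ∫⁻ u, ENNReal.ofReal (k u) * W (c • u) := by
      have e1 : J = ENNReal.ofReal h * ∫⁻ t, K t * W t ∂(ENNReal.ofReal h⁻¹ • volume) := by
        rw [lintegral_smul_measure, smul_eq_mul, ← mul_assoc, ← ENNReal.ofReal_mul hh0.le,
          mul_inv_cancel₀ hh0.ne', ENNReal.ofReal_one, one_mul, hJ_def]
      rw [e1, ← hmap, lintegral_map hml (measurable_const_smul c),
        ← lintegral_const_mul (ENNReal.ofReal h)
          (f := fun a : EuclideanSpace ℝ (Fin d) => K (c • a) * W (c • a))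
          ((hKm.comp (measurable_const_smul c)).mul (hWm.comp (measurable_const_smul c)))]
      refine lintegral_congr fun u => ?_
      have : K (c • u) = ENNReal.ofReal (h⁻¹ * k u) := by
        show ENNReal.ofReal (h⁻¹ * k (c⁻¹ • c • u)) = _
        rw [inv_smul_smul₀ hc_ne]
      rw [this, ← mul_assoc, ← ENNReal.ofReal_mul hh0.le,
        show h * (h⁻¹ * k u) = k u from by field_simp]
    rw [hkey]
    have hbound : ∀ u : EuclideanSpace ℝ (Fin d),
        ENNReal.ofReal (k u) * W (c • u) ≤ ENNReal.ofReal (M ^ s) * (W u * ENNReal.ofReal (k u)) := by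
      intro u
      have hWc : W (c • u) ≤ ENNReal.ofReal (M ^ s) * W u := by
        show ENNReal.ofReal ((1+‖c • u‖)^s) ≤ ENNReal.ofReal (M ^ s) * ENNReal.ofReal ((1+‖u‖)^s)
        rw [← ENNReal.ofReal_mul hMs0.le]
        apply ENNReal.ofReal_le_ofReal
        rw [← Real.mul_rpow hM0.le (by positivity)]
        apply Real.rpow_le_rpow (by positivity) ?_ hs0.le
        rw [norm_smul, Real.norm_eq_abs, abs_of_pos hc0]
        nlinarith [norm_nonneg u]
      calc ENNReal.ofReal (k u) * W (c • u)
          ≤ ENNReal.ofReal (k u) * (ENNReal.ofReal (M ^ s) * W u) :=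
            by gcongr
        _ = ENNReal.ofReal (M ^ s) * (W u * ENNReal.ofReal (k u)) := by ring
    calc (∫⁻ u, ENNReal.ofReal (k u) * W (c • u))
        ≤ ∫⁻ u, ENNReal.ofReal (M ^ s) * (W u * ENNReal.ofReal (k u)) := lintegral_mono hbound
      _ = ENNReal.ofReal (M ^ s) * Lk := by
          rw [lintegral_const_mul (ENNReal.ofReal (M ^ s))
            (f := fun u : EuclideanSpace ℝ (Fin d) => W u * ENNReal.ofReal (k u))
            (hWm.mul (ENNReal.measurable_ofReal.comp hkm)), ← hLk_def]
  -- Tonelli bound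
  have hGW : (∫⁻ y, G y * W y) ≤ J * Lf := by
    have hswap_meas : Measurable fun z : EuclideanSpace ℝ (Fin d) × EuclideanSpace ℝ (Fin d) =>
        (K (z.1 - z.2) * F z.2) * W z.1 :=
      ((hKm.comp (measurable_fst.sub measurable_snd)).mul (hFm.comp measurable_snd)).mul
        (hWm.comp measurable_fst)
    have e1 : (∫⁻ y, G y * W y) = ∫⁻ y, ∫⁻ x, (K (y - x) * F x) * W y := by
      exact lintegral_congr fun y => (lintegral_mul_const' (W y) _ (hWtop y)).symm
    rw [e1, lintegral_lintegral_swap hswap_meas.aemeasurable]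
    have h2 : ∀ x : EuclideanSpace ℝ (Fin d),
        (∫⁻ y, (K (y - x) * F x) * W y) ≤ (F x * W x) * J := by
      intro x
      have hFW_top : F x * W x ≠ ⊤ := ENNReal.mul_ne_top ENNReal.ofReal_ne_top (hWtop x)
      calc (∫⁻ y, (K (y - x) * F x) * W y)
          ≤ ∫⁻ y, (F x * W x) * (K (y - x) * W (y - x)) := by
            refine lintegral_mono fun y => ?_
            calc (K (y - x) * F x) * W y ≤ (K (y - x) * F x) * (W (y - x) * W x) :=
                by gcongr; exact hWsub x y
              _ = (F x * W x) * (K (y - x) * W (y - x)) := by ring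
        _ = (F x * W x) * ∫⁻ y, K (y - x) * W (y - x) :=
            lintegral_const_mul' _ _ hFW_top
        _ = (F x * W x) * J := by
            rw [hJ_def, lintegral_sub_right_eq_self (fun t => K t * W t) x]
    calc (∫⁻ x, ∫⁻ y, (K (y - x) * F x) * W y)
        ≤ ∫⁻ x, (F x * W x) * J := lintegral_mono h2
      _ = (∫⁻ x, F x * W x) * J := lintegral_mul_const _ (hFm.mul hWm)
      _ = J * Lf := by
          rw [hLf_def, show (∫⁻ x, F x * W x) = ∫⁻ x, W x * F x from
            lintegral_congr fun x => mul_comm _ _, mul_comm]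
  -- Hölder
  have hPQ : Real.HolderConjugate (1/q) (1/(1-q)) := by
    refine Real.holderConjugate_iff.mpr ⟨?_, ?_⟩
    · rw [lt_div_iff₀ hq0]; linarith
    · rw [one_div, one_div, inv_inv, inv_inv]; ring
  have holder := ENNReal.lintegral_mul_le_Lp_mul_Lq volume hPQ
    (f := fun y => (G y * W y) ^ q) (g := fun y => W y ^ (-q))
    (((hGm.mul hWm).pow_const _).aemeasurable) ((hWm.pow_const _).aemeasurable)
  have hGq_le : (∫⁻ y, G y ^ q) ≤ (∫⁻ y, G y * W y) ^ q * ENNReal.ofReal Ir ^ (1 - q) := by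
    have e0 : ∀ y : EuclideanSpace ℝ (Fin d),
        G y ^ q = ((G y * W y) ^ q * W y ^ (-q)) := by
      intro y
      rw [ENNReal.mul_rpow_of_nonneg _ _ hq0.le, mul_assoc,
        ← ENNReal.rpow_add _ _ (hW0 y) (hWtop y)]
      norm_num
    have e1 : ∀ y : EuclideanSpace ℝ (Fin d), ((G y * W y) ^ q) ^ (1/q) = G y * W y := by
      intro y
      rw [← ENNReal.rpow_mul, mul_one_div_cancel hq0.ne', ENNReal.rpow_one]
    have e2 : ∀ y : EuclideanSpace ℝ (Fin d),
        (W y ^ (-q)) ^ (1/(1-q)) = ENNReal.ofReal ((1+‖y‖)^(-r)) := by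
      intro y
      have h1 : (0:ℝ) < 1 + ‖y‖ := by positivity
      rw [← ENNReal.rpow_mul]
      show ENNReal.ofReal ((1+‖y‖)^s) ^ (-q * (1/(1-q))) = _
      rw [ENNReal.ofReal_rpow_of_pos (Real.rpow_pos_of_pos h1 s), ← Real.rpow_mul h1.le]
      congr 1
      rw [hr_def]
      field_simp
    have e3 : (∫⁻ y : EuclideanSpace ℝ (Fin d), ENNReal.ofReal ((1+‖y‖)^(-r))) = ENNReal.ofReal Ir := by
      rw [hIr_def, MeasureTheory.ofReal_integral_eq_lintegral_ofReal hIr_int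
        (Filter.Eventually.of_forall fun y => Real.rpow_nonneg (by positivity) _)]
    calc (∫⁻ y, G y ^ q) = ∫⁻ y, ((fun y => (G y * W y) ^ q) * (fun y => W y ^ (-q))) y :=
        lintegral_congr fun y => e0 y
      _ ≤ (∫⁻ y, ((G y * W y) ^ q) ^ (1/q)) ^ (1/(1/q))
          * (∫⁻ y, (W y ^ (-q)) ^ (1/(1-q))) ^ (1/(1/(1-q))) := holder
      _ = (∫⁻ y, G y * W y) ^ q * ENNReal.ofReal Ir ^ (1 - q) := by
          rw [lintegral_congr e1, lintegral_congr e2, e3, one_div_one_div, one_div_one_div]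
  -- assemble
  calc (∫⁻ y : EuclideanSpace ℝ (Fin d),
        ENNReal.ofReal ((∫ x, (h⁻¹ * k (c⁻¹ • (y - x))) * f x) ^ q))
      ≤ ∫⁻ y, G y ^ q := lintegral_mono step1
    _ ≤ (∫⁻ y, G y * W y) ^ q * ENNReal.ofReal Ir ^ (1 - q) := hGq_le
    _ ≤ (ENNReal.ofReal (M ^ s) * Lk * Lf) ^ q * ENNReal.ofReal Ir ^ (1 - q) := by
        gcongr
        calc (∫⁻ y, G y * W y) ≤ J * Lf := hGW
          _ ≤ ENNReal.ofReal (M ^ s) * Lk * Lf := by gcongr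
    _ = ENNReal.ofReal (M ^ (s*q) * Ir ^ (1-q) *
          ((∫ y : EuclideanSpace ℝ (Fin d), (1 + ‖y‖) ^ s * f y) *
            (∫ y : EuclideanSpace ℝ (Fin d), (1 + ‖y‖) ^ s * k y)) ^ q) := by
        have hIf0 : 0 ≤ ∫ y : EuclideanSpace ℝ (Fin d), (1 + ‖y‖) ^ s * f y :=
          integral_nonneg fun y => mul_nonneg (Real.rpow_nonneg (by positivity) _) (hf0 y)
        have hIk0 : 0 ≤ ∫ y : EuclideanSpace ℝ (Fin d), (1 + ‖y‖) ^ s * k y :=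
          integral_nonneg fun y => mul_nonneg (Real.rpow_nonneg (by positivity) _) (hk0 y)
        rw [ENNReal.ofReal_mul (by positivity), ENNReal.ofReal_mul (by positivity)]
        rw [← ENNReal.ofReal_rpow_of_nonneg (mul_nonneg hIf0 hIk0) hq0.le,
          ENNReal.ofReal_mul hIf0, ← hLf, ← hLk]
        rw [show M ^ (s*q) = (M ^ s) ^ q from by rw [← Real.rpow_mul hM0.le],
          ← ENNReal.ofReal_rpow_of_pos hMs0, ← ENNReal.ofReal_rpow_of_pos hIr_pos]
        rw [ENNReal.mul_rpow_of_nonneg _ _ hq0.le, ENNReal.mul_rpow_of_nonneg _ _ hq0.le,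
          ENNReal.mul_rpow_of_nonneg _ _ hq0.le]
        ring
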